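/- arXiv:1902.06275 — 2 statements merged into one kernel-verified Lean document; each statement's English description precedes it below -/
import Mathlib

section
/- For fixed ℓ ≥ 1 and r ≥ 1, the zero-error capacity C₀(q) = −log₂ ρ(q,ℓ,r) is strictly increasing in q (for q ≥ 2), and lim_{q→∞} (C₀(q) − log₂ q) = 0. -/
namespace ZeroErrorDup

/-- Output relation of the (ℓ,r)-0-insertion channel acting on strings over the
alphabet A_q = {0,1,…,q−1} (encoded as lists of naturals): after each input symbol,
`c` copies of the block `0^ℓ` are inserted, for some `c ∈ {0,1,…,r}`. -/
inductive IsOutput (ℓ r : ℕ) : List ℕ → List ℕ → Prop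
  | nil : IsOutput ℓ r [] []
  | cons (a : ℕ) (c : ℕ) (hc : c ≤ r) {x y : List ℕ} :
      IsOutput ℓ r x y → IsOutput ℓ r (a :: x) (a :: (List.replicate (c * ℓ) 0 ++ y))

/-- Two strings are confusable if some string is an output of both. -/
def Confusable (ℓ r : ℕ) (x y : List ℕ) : Prop :=
  ∃ z, IsOutput ℓ r x z ∧ IsOutput ℓ r y z

/-- A set of strings is a zero-error code if every two distinct elements are
non-confusable. -/
def ZeroErrorCode (ℓ r : ℕ) (C : Set (List ℕ)) : Prop :=
  ∀ x ∈ C, ∀ y ∈ C, x ≠ y → ¬ Confusable ℓ r x y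

/-- `L ℓ r i j = ((r i + 1)(r ℓ + 1)^j − 1)/r − 1` (the division is exact). -/
def L (ℓ r i j : ℕ) : ℕ := ((r * i + 1) * (r * ℓ + 1) ^ j - 1) / r - 1

/-- The generating function `v_{q,ℓ,r}(x) = (q−1) Σ_{j=0}^∞ Σ_{i=1}^ℓ x^{L(i,j)+1}`. -/
noncomputable def v (q ℓ r : ℕ) (x : ℝ) : ℝ :=
  ((q : ℝ) - 1) * ∑' j : ℕ, ∑ i ∈ Finset.Icc 1 ℓ, x ^ (L ℓ r i j + 1)

noncomputable def S (ℓ r : ℕ) (x : ℝ) : ℝ :=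
  ∑' j : ℕ, ∑ i ∈ Finset.Icc 1 ℓ, x ^ (L ℓ r i j + 1)

variable (ℓ r : ℕ)

lemma pow_ge (a j : ℕ) : j * a + 1 ≤ (a + 1) ^ j := by
  induction j with
  | zero => simp
  | succ j ih =>
    have : (a+1)^(j+1) = (a+1)^j * (a+1) := by ring
    rw [this]
    have h := Nat.mul_le_mul_right (a+1) ih
    nlinarith [Nat.zero_le (j*(a*a))]

lemma L_succ (hr : 1 ≤ r) (i j : ℕ) (hi : 1 ≤ i) :
    L ℓ r i j + 1 = ((r * i + 1) * (r * ℓ + 1) ^ j - 1) / r := by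
  have h1 : 1 ≤ (r * ℓ + 1) ^ j := Nat.one_le_pow _ _ (by omega)
  have h2 : r + 1 ≤ (r * i + 1) * (r * ℓ + 1) ^ j := by
    have := Nat.mul_le_mul (show r + 1 ≤ r * i + 1 by nlinarith) h1
    simpa using this
  have h3 : 1 ≤ ((r * i + 1) * (r * ℓ + 1) ^ j - 1) / r :=
    (Nat.le_div_iff_mul_le (by omega)).2 (by omega)
  unfold L
  omega

lemma L_ge (hℓ : 1 ≤ ℓ) (hr : 1 ≤ r) (i j : ℕ) (hi : 1 ≤ i) :
    j + 1 ≤ L ℓ r i j + 1 := by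
  rw [L_succ ℓ r hr i j hi]
  apply (Nat.le_div_iff_mul_le (by omega)).2
  have h1 : j * (r * ℓ) + 1 ≤ (r * ℓ + 1) ^ j := pow_ge _ _
  have h2 : 1 ≤ r * ℓ := by nlinarith
  have h3 : 1 ≤ r * i := by nlinarith
  have key := Nat.mul_le_mul (show r + 1 ≤ r * i + 1 by
    have := Nat.le_mul_of_pos_right r (show 0 < i by omega); omega) h1
  suffices h : (j + 1) * r + 1 ≤ (r * i + 1) * (r * ℓ + 1) ^ j by
    simpa using Nat.sub_le_sub_right h 1
  nlinarith [Nat.zero_le (j * (r * (r * ℓ)))]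

lemma L_zero (hr : 1 ≤ r) (i : ℕ) (hi : 1 ≤ i) : L ℓ r i 0 + 1 = i := by
  rw [L_succ ℓ r hr i 0 hi]
  simp [Nat.mul_div_cancel_left, Nat.succ_sub_one, Nat.mul_div_cancel_left,
    Nat.mul_div_cancel_left]
  rw [Nat.mul_comm]
  exact Nat.mul_div_cancel _ (by omega)

-- term bound
lemma term_le (hℓ : 1 ≤ ℓ) (hr : 1 ≤ r) {x : ℝ} (hx0 : 0 ≤ x) (hx1 : x ≤ 1) (j : ℕ) :
    ∑ i ∈ Finset.Icc 1 ℓ, x ^ (L ℓ r i j + 1) ≤ (ℓ : ℝ) * x ^ (j + 1) := by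
  calc ∑ i ∈ Finset.Icc 1 ℓ, x ^ (L ℓ r i j + 1)
      ≤ ∑ i ∈ Finset.Icc 1 ℓ, x ^ (j + 1) := by
        apply Finset.sum_le_sum
        intro i hi
        exact pow_le_pow_of_le_one hx0 hx1 (L_ge ℓ r hℓ hr i j (Finset.mem_Icc.1 hi).1)
    _ = (ℓ : ℝ) * x ^ (j + 1) := by
        rw [Finset.sum_const, Nat.card_Icc]; simp
  done

lemma term_nonneg {x : ℝ} (hx0 : 0 ≤ x) (j : ℕ) :
    0 ≤ ∑ i ∈ Finset.Icc 1 ℓ, x ^ (L ℓ r i j + 1) :=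
  Finset.sum_nonneg fun i _ => pow_nonneg hx0 _

lemma summable_geom_aux {x : ℝ} (hx0 : 0 ≤ x) (hx1 : x < 1) (c : ℝ) (k : ℕ) :
    Summable (fun j : ℕ => c * x ^ (j + k)) := by
  have : Summable (fun j : ℕ => x ^ j) := summable_geometric_of_lt_one hx0 hx1
  have h2 : Summable (fun j : ℕ => x ^ (j + k)) := by
    simpa [pow_add] using this.mul_right (x ^ k)
  exact h2.mul_left c

lemma summable_S (hℓ : 1 ≤ ℓ) (hr : 1 ≤ r) {x : ℝ} (hx0 : 0 ≤ x) (hx1 : x < 1) :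
    Summable (fun j : ℕ => ∑ i ∈ Finset.Icc 1 ℓ, x ^ (L ℓ r i j + 1)) :=
  Summable.of_nonneg_of_le (term_nonneg ℓ r hx0) (term_le ℓ r hℓ hr hx0 hx1.le)
    (summable_geom_aux hx0 hx1 (ℓ : ℝ) 1)

lemma S_ge (hℓ : 1 ≤ ℓ) (hr : 1 ≤ r) {x : ℝ} (hx0 : 0 ≤ x) (hx1 : x < 1) :
    x ≤ S ℓ r x := by
  have h0 : x ≤ ∑ i ∈ Finset.Icc 1 ℓ, x ^ (L ℓ r i 0 + 1) := by
    have h1 : (1 : ℕ) ∈ Finset.Icc 1 ℓ := Finset.mem_Icc.2 ⟨le_refl _, hℓ⟩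
    have := Finset.single_le_sum (f := fun i => x ^ (L ℓ r i 0 + 1))
      (fun i _ => pow_nonneg hx0 _) h1
    simp only [L_zero ℓ r hr 1 le_rfl, pow_one] at this
    exact this
  exact h0.trans (Summable.le_tsum (summable_S ℓ r hℓ hr hx0 hx1) 0
    fun j _ => term_nonneg ℓ r hx0 j)

lemma S_mono (hℓ : 1 ≤ ℓ) (hr : 1 ≤ r) {x y : ℝ} (hx0 : 0 ≤ x) (hxy : x ≤ y)
    (hy1 : y < 1) : S ℓ r x ≤ S ℓ r y := by
  apply Summable.tsum_le_tsum _ (summable_S ℓ r hℓ hr hx0 (lt_of_le_of_lt hxy hy1))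
    (summable_S ℓ r hℓ hr (hx0.trans hxy) hy1)
  intro j
  exact Finset.sum_le_sum fun i _ => pow_le_pow_left₀ hx0 hxy _

lemma S_strictMono (hℓ : 1 ≤ ℓ) (hr : 1 ≤ r) {x y : ℝ} (hx0 : 0 ≤ x) (hxy : x < y)
    (hy1 : y < 1) : S ℓ r x < S ℓ r y := by
  apply Summable.tsum_lt_tsum_of_nonneg (i := 0) (term_nonneg ℓ r hx0)
    (fun j => Finset.sum_le_sum fun i _ => pow_le_pow_left₀ hx0 hxy.le _)
    _ (summable_S ℓ r hℓ hr (hx0.trans hxy.le) hy1)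
  apply Finset.sum_lt_sum_of_nonempty ⟨1, Finset.mem_Icc.2 ⟨le_rfl, hℓ⟩⟩
  intro i hi
  exact pow_lt_pow_left₀ hxy hx0 (by omega)

set_option maxHeartbeats 1000000 in
lemma S_le (hℓ : 1 ≤ ℓ) (hr : 1 ≤ r) {x : ℝ} (hx0 : 0 ≤ x) (hx1 : x ≤ 1/2) :
    S ℓ r x ≤ x + 3 * ℓ * x ^ 2 := by
  have hx1' : x < 1 := by linarith
  have hsum := summable_S ℓ r hℓ hr hx0 hx1'
  rw [S, Summable.tsum_eq_zero_add hsum]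
  have h0 : ∑ i ∈ Finset.Icc 1 ℓ, x ^ (L ℓ r i 0 + 1) ≤ x + (ℓ : ℝ) * x ^ 2 := by
    have hins : Finset.Icc 1 ℓ = insert 1 (Finset.Icc 2 ℓ) := by
      ext i; simp [Finset.mem_Icc, Finset.mem_insert]; omega
    rw [hins, Finset.sum_insert (by simp)]
    rw [L_zero ℓ r hr 1 le_rfl, pow_one]
    gcongr
    calc ∑ i ∈ Finset.Icc 2 ℓ, x ^ (L ℓ r i 0 + 1)
        ≤ ∑ i ∈ Finset.Icc 2 ℓ, x ^ 2 := by
          apply Finset.sum_le_sum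
          intro i hi
          have hi2 : 2 ≤ i := (Finset.mem_Icc.1 hi).1
          rw [L_zero ℓ r hr i (by omega)]
          exact pow_le_pow_of_le_one hx0 hx1'.le hi2
      _ ≤ (ℓ : ℝ) * x ^ 2 := by
          rw [Finset.sum_const, Nat.card_Icc, nsmul_eq_mul]
          have hc : ((ℓ + 1 - 2 : ℕ) : ℝ) ≤ (ℓ : ℝ) :=
            Nat.cast_le.2 (by omega)
          nlinarith [sq_nonneg x]
  have htail : ∑' j : ℕ, ∑ i ∈ Finset.Icc 1 ℓ, x ^ (L ℓ r i (j + 1) + 1)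
      ≤ 2 * ℓ * x ^ 2 := by
    have hle : ∀ j : ℕ, ∑ i ∈ Finset.Icc 1 ℓ, x ^ (L ℓ r i (j + 1) + 1)
        ≤ (ℓ : ℝ) * x ^ 2 * x ^ j := by
      intro j
      have := term_le ℓ r hℓ hr hx0 hx1'.le (j + 1)
      calc ∑ i ∈ Finset.Icc 1 ℓ, x ^ (L ℓ r i (j + 1) + 1)
          ≤ (ℓ : ℝ) * x ^ (j + 1 + 1) := this
        _ = (ℓ : ℝ) * x ^ 2 * x ^ j := by ring
    have hgs : Summable (fun j : ℕ => (ℓ : ℝ) * x ^ 2 * x ^ j) :=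
      (summable_geometric_of_lt_one hx0 hx1').mul_left _
    have hsum1 : Summable (fun j : ℕ => ∑ i ∈ Finset.Icc 1 ℓ, x ^ (L ℓ r i (j + 1) + 1)) :=
      (summable_nat_add_iff (f := fun j => ∑ i ∈ Finset.Icc 1 ℓ, x ^ (L ℓ r i j + 1)) 1).2 hsum
    have step1 : ∑' j : ℕ, ∑ i ∈ Finset.Icc 1 ℓ, x ^ (L ℓ r i (j + 1) + 1)
        ≤ ∑' j : ℕ, (ℓ : ℝ) * x ^ 2 * x ^ j := Summable.tsum_le_tsum hle hsum1 hgs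
    have step2 : ∑' j : ℕ, (ℓ : ℝ) * x ^ 2 * x ^ j = (ℓ : ℝ) * x ^ 2 * (1 - x)⁻¹ := by
      rw [tsum_mul_left, tsum_geometric_of_lt_one hx0 hx1']
    have h2 : (1 - x)⁻¹ ≤ 2 := by
      rw [inv_le_comm₀ (by linarith) (by norm_num)]
      linarith
    have hℓ0 : (0:ℝ) ≤ (ℓ:ℝ) * x ^ 2 := by positivity
    nlinarith [step1, step2, h2, hℓ0]
  nlinarith [htail, h0]


lemma v_eq (q ℓ r : ℕ) (x : ℝ) : ((q : ℝ) - 1) * S ℓ r x =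
    ((q : ℝ) - 1) * ∑' j : ℕ, ∑ i ∈ Finset.Icc 1 ℓ, x ^ (L ℓ r i j + 1) := rfl

theorem main_aux (ℓ r : ℕ) (hℓ : 1 ≤ ℓ) (hr : 1 ≤ r)
    (ρ : ℕ → ℝ)
    (hρ : ∀ q : ℕ, 2 ≤ q → ρ q ∈ Set.Ioo (0 : ℝ) 1 ∧
      ((q : ℝ) - 1) * S ℓ r (ρ q) = 1) :
    StrictMonoOn (fun q : ℕ => - Real.logb 2 (ρ q)) (Set.Ici 2) ∧
    Filter.Tendsto (fun q : ℕ => (- Real.logb 2 (ρ q)) - Real.logb 2 (q : ℝ))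
      Filter.atTop (nhds 0) := by
  constructor
  · intro q hq q' hq' hlt
    simp only [Set.mem_Ici] at hq hq'
    obtain ⟨⟨h0, h1⟩, heq⟩ := hρ q hq
    obtain ⟨⟨h0', h1'⟩, heq'⟩ := hρ q' hq'
    have hcast : (q : ℝ) < (q' : ℝ) := Nat.cast_lt.2 hlt
    have hq2 : (2 : ℝ) ≤ (q : ℝ) := by exact_mod_cast hq
    have hlt2 : ρ q' < ρ q := by
      by_contra h
      push_neg at h
      have hS : S ℓ r (ρ q) ≤ S ℓ r (ρ q') := S_mono ℓ r hℓ hr h0.le h h1'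
      have hSpos : 0 < S ℓ r (ρ q) := lt_of_lt_of_le h0 (S_ge ℓ r hℓ hr h0.le h1)
      nlinarith
    have := Real.logb_lt_logb (b := 2) (by norm_num) h0' hlt2
    simpa using neg_lt_neg this
  · -- limit part
    have hbound : ∀ q : ℕ, 3 ≤ q →
        (q : ℝ) / ((q : ℝ) + (3 * (ℓ : ℝ) - 1)) ≤ (q : ℝ) * ρ q ∧
        (q : ℝ) * ρ q ≤ (q : ℝ) / ((q : ℝ) + (-1 : ℝ)) := by
      intro q hq3
      obtain ⟨⟨h0, h1⟩, heq⟩ := hρ q (by omega)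
      have hq3' : (3 : ℝ) ≤ (q : ℝ) := by exact_mod_cast hq3
      have hq1 : (2 : ℝ) ≤ (q : ℝ) - 1 := by linarith
      have hSx : S ℓ r (ρ q) = 1 / ((q : ℝ) - 1) := by
        field_simp at heq ⊢
        linarith
      have hup : ρ q ≤ 1 / ((q : ℝ) - 1) := by
        rw [← hSx]; exact S_ge ℓ r hℓ hr h0.le h1
      have hhalf : ρ q ≤ 1 / 2 := hup.trans (by
        rw [div_le_div_iff₀ (by linarith) (by norm_num)]; linarith)
      have hSle := S_le ℓ r hℓ hr h0.le hhalf
      have hℓ1 : (1 : ℝ) ≤ (ℓ : ℝ) := by exact_mod_cast hℓ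
      have hlow : 1 / ((q : ℝ) - 1 + 3 * ℓ) ≤ ρ q := by
        have hx2 : (ρ q) ^ 2 ≤ ρ q * (1 / ((q : ℝ) - 1)) := by
          have := mul_le_mul_of_nonneg_left hup h0.le
          nlinarith
        have key : 1 / ((q : ℝ) - 1) ≤ ρ q * (1 + 3 * ℓ / ((q : ℝ) - 1)) := by
          have : S ℓ r (ρ q) ≤ ρ q + 3 * ℓ * (ρ q * (1 / ((q : ℝ) - 1))) := by
            nlinarith
          rw [hSx] at this
          have h3 : 3 * (ℓ : ℝ) * (ρ q * (1 / ((q : ℝ) - 1)))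
              = ρ q * (3 * ℓ / ((q : ℝ) - 1)) := by ring
          nlinarith [this]
        rw [div_le_iff₀ (by positivity)]
        have hq0 : (0 : ℝ) < (q : ℝ) - 1 := by linarith
        rw [div_le_iff₀ hq0] at key
        have hexp : ρ q * (1 + 3 * ↑ℓ / ((q : ℝ) - 1)) * ((q : ℝ) - 1)
            = ρ q * (((q : ℝ) - 1) + 3 * ℓ) := by
          field_simp
        rw [hexp] at key
        linarith [key]
      constructor
      · have hD : (q : ℝ) + (3 * (ℓ : ℝ) - 1) = (q : ℝ) - 1 + 3 * ℓ := by ring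
        rw [hD, div_eq_mul_one_div]
        exact mul_le_mul_of_nonneg_left hlow (by positivity)
      · have hD : (q : ℝ) + (-1 : ℝ) = (q : ℝ) - 1 := by ring
        rw [hD, div_eq_mul_one_div]
        exact mul_le_mul_of_nonneg_left hup (by positivity)
    have hA : Filter.Tendsto (fun q : ℕ => (q : ℝ) / ((q : ℝ) + (3 * (ℓ : ℝ) - 1)))
        Filter.atTop (nhds 1) := tendsto_natCast_div_add_atTop _
    have hB : Filter.Tendsto (fun q : ℕ => (q : ℝ) / ((q : ℝ) + (-1 : ℝ)))
        Filter.atTop (nhds 1) := tendsto_natCast_div_add_atTop _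
    have hqx : Filter.Tendsto (fun q : ℕ => (q : ℝ) * ρ q) Filter.atTop (nhds 1) := by
      apply tendsto_of_tendsto_of_tendsto_of_le_of_le' hA hB
      · filter_upwards [Filter.eventually_ge_atTop 3] with q hq using (hbound q hq).1
      · filter_upwards [Filter.eventually_ge_atTop 3] with q hq using (hbound q hq).2
    have hc : ContinuousAt (fun y : ℝ => - Real.logb 2 y) 1 := by
      apply ContinuousAt.neg
      unfold Real.logb
      exact (Real.continuousAt_log one_ne_zero).div_const _
    have hcomp : Filter.Tendsto (fun q : ℕ => - Real.logb 2 ((q : ℝ) * ρ q))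
        Filter.atTop (nhds 0) := by
      have := hc.tendsto.comp hqx
      simpa [Function.comp_def] using this
    apply hcomp.congr'
    filter_upwards [Filter.eventually_ge_atTop 3] with q hq
    obtain ⟨⟨h0, h1⟩, heq⟩ := hρ q (by omega)
    have hq0 : (q : ℝ) ≠ 0 := by positivity
    rw [Real.logb_mul hq0 (ne_of_gt h0)]
    ring

/-- for fixed `ℓ ≥ 1` and `r ≥ 1`, the zero-error capacity
`C₀(q) = −log₂ ρ(q,ℓ,r)` is strictly increasing in `q ≥ 2`, and
`lim_{q→∞} (C₀(q) − log₂ q) = 0`. -/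
theorem stmt14 (ℓ r : ℕ) (hℓ : 1 ≤ ℓ) (hr : 1 ≤ r)
    (ρ : ℕ → ℝ) (hρ : ∀ q : ℕ, 2 ≤ q → ρ q ∈ Set.Ioo (0 : ℝ) 1 ∧ v q ℓ r (ρ q) = 1) :
    StrictMonoOn (fun q : ℕ => - Real.logb 2 (ρ q)) (Set.Ici 2) ∧
    Filter.Tendsto (fun q : ℕ => (- Real.logb 2 (ρ q)) - Real.logb 2 (q : ℝ))
      Filter.atTop (nhds 0) := by
  exact main_aux ℓ r hℓ hr ρ (fun q hq => ⟨(hρ q hq).1, (hρ q hq).2⟩)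

end ZeroErrorDup
end

section
/- For fixed q ≥ 2 and r ≥ 1, the zero-error capacity C₀(ℓ) = −log₂ ρ(q,ℓ,r) is strictly increasing in ℓ (for ℓ ≥ 1), and lim_{ℓ→∞} C₀(ℓ) = log₂ q. -/
namespace ZeroErrorDup

def bb (ℓ r n : ℕ) : ℕ := (r * ((n-1) % ℓ + 1) + 1) * (r*ℓ+1) ^ ((n-1)/ℓ)

def A (ℓ r n : ℕ) : ℕ := (bb ℓ r n - 1) / r

lemma bb_index (ℓ r i j : ℕ) (h1 : 1 ≤ i) (h2 : i ≤ ℓ) :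
    bb ℓ r (j*ℓ + i) = (r*i+1) * (r*ℓ+1)^j := by
  have h : j*ℓ + i - 1 = (i-1) + ℓ*j := by rw [mul_comm ℓ j]; omega
  have hi : i - 1 < ℓ := by omega
  unfold bb
  rw [h, Nat.add_mul_mod_self_left, Nat.add_mul_div_left _ _ (by omega : 0 < ℓ),
    Nat.mod_eq_of_lt hi, Nat.div_eq_of_lt hi]
  have h3 : i - 1 + 1 = i := by omega
  rw [h3]
  ring_nf

lemma one_le_bb (ℓ r n : ℕ) : 1 ≤ bb ℓ r n := by
  have h1 : 0 < (r*ℓ+1) ^ ((n-1)/ℓ) := pow_pos (by omega) _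
  exact Nat.mul_pos (by omega) h1

lemma r_mul_A (ℓ r n : ℕ) (hr : 1 ≤ r) : r * A ℓ r n + 1 = bb ℓ r n := by
  have hdvd : r ∣ bb ℓ r n - 1 := by
    unfold bb
    set j := (n-1)/ℓ
    set i := (n-1) % ℓ + 1
    have hp : 1 ≤ (r*ℓ+1)^j := Nat.one_le_pow _ _ (by omega)
    have h1 : (r*i+1) * (r*ℓ+1)^j - 1 = r*i*(r*ℓ+1)^j + ((r*ℓ+1)^j - 1) := by
      have e : (r*i+1) * (r*ℓ+1)^j = r*i*(r*ℓ+1)^j + (r*ℓ+1)^j := by ring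
      omega
    rw [h1]
    apply Nat.dvd_add
    · exact Dvd.intro_left (i * (r*ℓ+1)^j) (by ring)
    · have h2 := Nat.sub_dvd_pow_sub_pow (r*ℓ+1) 1 j
      simp only [one_pow, Nat.add_sub_cancel] at h2
      exact dvd_trans ⟨ℓ, by ring⟩ h2
  have h1 := one_le_bb ℓ r n
  obtain ⟨c, hc⟩ := hdvd
  unfold A
  rw [hc, Nat.mul_div_cancel_left _ (by omega : 0 < r)]
  omega

lemma one_le_A (ℓ r n : ℕ) (hℓ : 1 ≤ ℓ) (hr : 1 ≤ r) : 1 ≤ A ℓ r n := by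
  have hA := r_mul_A ℓ r n hr
  have hbge : r + 1 ≤ bb ℓ r n := by
    unfold bb
    have hp : 1 ≤ (r*ℓ+1)^((n-1)/ℓ) := Nat.one_le_pow _ _ (by omega)
    calc r + 1 = (r*1+1) * 1 := by ring
      _ ≤ (r * ((n-1) % ℓ + 1) + 1) * (r*ℓ+1)^((n-1)/ℓ) :=
          Nat.mul_le_mul (by
            have : r * 1 ≤ r * ((n-1) % ℓ + 1) := Nat.mul_le_mul_left r (by omega)
            omega) hp
  by_contra hcon
  have : A ℓ r n = 0 := by omega
  rw [this] at hA
  simp at hA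
  omega

lemma A_index (ℓ r i j : ℕ) (hℓ : 1 ≤ ℓ) (hr : 1 ≤ r) (h1 : 1 ≤ i) (h2 : i ≤ ℓ) :
    L ℓ r i j + 1 = A ℓ r (j*ℓ + i) := by
  have hb := bb_index ℓ r i j h1 h2
  have hA := r_mul_A ℓ r (j*ℓ + i) hr
  have hge := one_le_A ℓ r (j*ℓ + i) hℓ hr
  unfold L
  rw [← hb, ← hA]
  have h3 : (r * A ℓ r (j*ℓ+i) + 1 - 1) / r = A ℓ r (j*ℓ+i) := by
    rw [Nat.add_sub_cancel, Nat.mul_div_cancel_left _ (by omega : 0 < r)]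
  rw [h3]
  omega

lemma bb_add (ℓ r n : ℕ) (hℓ : 1 ≤ ℓ) (hn : 1 ≤ n) :
    bb ℓ r (n + ℓ) = (r*ℓ+1) * bb ℓ r n := by
  unfold bb
  have h : n + ℓ - 1 = (n-1) + ℓ := by omega
  rw [h, Nat.add_mod_right, Nat.add_div_right _ (by omega : 0 < ℓ), pow_succ]
  ring

lemma bb_ge (ℓ r n : ℕ) (hℓ : 1 ≤ ℓ) (hn : 1 ≤ n) : r * n + 1 ≤ bb ℓ r n := by
  induction n using Nat.strong_induction_on with
  | _ n ih =>
    by_cases h : n ≤ ℓ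
    · have h1 := bb_index ℓ r n 0 hn h
      simp at h1
      omega
    · push_neg at h
      obtain ⟨m, hm⟩ : ∃ m, n = m + ℓ := ⟨n - ℓ, by omega⟩
      subst hm
      rw [bb_add ℓ r m hℓ (by omega)]
      have ihh := ih m (by omega) (by omega)
      have h3 : (r*ℓ+1) * (r*m+1) ≤ (r*ℓ+1) * bb ℓ r m := Nat.mul_le_mul_left _ ihh
      have e1 : (r*ℓ+1) * (r*m+1) = r*ℓ*(r*m) + r*ℓ + r*m + 1 := by ring
      have e2 : r*(m+ℓ)+1 = r*m + r*ℓ + 1 := by ring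
      linarith [Nat.zero_le (r*ℓ*(r*m))]

lemma bb_step (ℓ r m : ℕ) (hℓ : 1 ≤ ℓ) (hr : 1 ≤ r) (hm : 1 ≤ m) :
    (r*ℓ+1+r) * bb ℓ r m ≤ (r*ℓ+1) * bb ℓ r (m+1) := by
  set k := (m-1) % ℓ with hk
  set j := (m-1) / ℓ with hj
  have hdm := Nat.div_add_mod (m-1) ℓ
  have hm1 : ℓ * j + k = m - 1 := by rw [hj, hk]; exact hdm
  have hkl : k < ℓ := Nat.mod_lt _ (by omega)
  have hbm : bb ℓ r m = (r*(k+1)+1) * (r*ℓ+1)^j := by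
    have h : m = j*ℓ + (k+1) := by rw [mul_comm j ℓ]; omega
    rw [h]; exact bb_index ℓ r (k+1) j (by omega) (by omega)
  by_cases hc : k + 1 < ℓ
  · have hbm1 : bb ℓ r (m+1) = (r*(k+2)+1) * (r*ℓ+1)^j := by
      have h : m + 1 = j*ℓ + (k+2) := by rw [mul_comm j ℓ]; omega
      rw [h]; exact bb_index ℓ r (k+2) j (by omega) (by omega)
    rw [hbm, hbm1]
    have h6 : r*(k+1)+1 ≤ r*ℓ+1 := by
      have := Nat.mul_le_mul_left r (show k+1 ≤ ℓ by omega)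
      omega
    have base : (r*ℓ+1+r) * (r*(k+1)+1) ≤ (r*ℓ+1) * (r*(k+2)+1) :=
      calc (r*ℓ+1+r) * (r*(k+1)+1)
          = (r*(k+1)+1)*(r*ℓ+1) + (r*(k+1)+1)*r := by ring
        _ ≤ (r*(k+1)+1)*(r*ℓ+1) + (r*ℓ+1)*r :=
            Nat.add_le_add_left (Nat.mul_le_mul_right r h6) _
        _ = (r*ℓ+1) * (r*(k+2)+1) := by ring
    calc (r*ℓ+1+r) * ((r*(k+1)+1) * (r*ℓ+1)^j)
        = ((r*ℓ+1+r) * (r*(k+1)+1)) * (r*ℓ+1)^j := by ring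
      _ ≤ ((r*ℓ+1) * (r*(k+2)+1)) * (r*ℓ+1)^j := Nat.mul_le_mul_right _ base
      _ = (r*ℓ+1) * ((r*(k+2)+1) * (r*ℓ+1)^j) := by ring
  · have hkeq : k + 1 = ℓ := by omega
    have hbm1 : bb ℓ r (m+1) = (r*1+1) * (r*ℓ+1)^(j+1) := by
      have h : m + 1 = (j+1)*ℓ + 1 := by
        have e : (j+1)*ℓ = ℓ*j + ℓ := by ring
        omega
      rw [h]; exact bb_index ℓ r 1 (j+1) le_rfl hℓ
    rw [hbm, hbm1, hkeq]
    calc (r*ℓ+1+r) * ((r*ℓ+1) * (r*ℓ+1)^j)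
        = ((r*ℓ+1+r) * (r*ℓ+1)) * (r*ℓ+1)^j := by ring
      _ ≤ ((r*ℓ+1) * ((r*1+1)*(r*ℓ+1))) * (r*ℓ+1)^j := by
          apply Nat.mul_le_mul_right
          nlinarith [Nat.zero_le (r*(r*ℓ)), Nat.one_le_iff_ne_zero.mpr (show r*ℓ ≠ 0 by positivity)]
      _ = (r*ℓ+1) * ((r*1+1) * (r*ℓ+1)^(j+1)) := by ring

lemma bb_anti (ℓ r n : ℕ) (hℓ : 1 ≤ ℓ) (hr : 1 ≤ r) (hn : 1 ≤ n) :
    bb (ℓ+1) r n ≤ bb ℓ r n := by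
  induction n using Nat.strong_induction_on with
  | _ n ih =>
    by_cases h : n ≤ ℓ
    · have h1 := bb_index ℓ r n 0 hn h
      have h2 := bb_index (ℓ+1) r n 0 hn (by omega)
      simp at h1 h2
      omega
    · by_cases h' : n = ℓ + 1
      · subst h'
        have h1 := bb_index ℓ r 1 1 le_rfl hℓ
        rw [show 1*ℓ+1 = ℓ+1 by ring] at h1
        have h2 := bb_index (ℓ+1) r (ℓ+1) 0 (by omega) le_rfl
        rw [show 0*(ℓ+1)+(ℓ+1) = ℓ+1 by ring] at h2
        rw [h1, h2]
        have e1 : (r*(ℓ+1)+1) * (r*(ℓ+1)+1)^0 = r*ℓ + r + 1 := by ring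
        have e2 : (r*1+1) * (r*ℓ+1)^1 = r*(r*ℓ) + r*ℓ + r + 1 := by ring
        rw [e1, e2]
        linarith [Nat.zero_le (r*(r*ℓ))]
      · have hn2 : ℓ + 2 ≤ n := by omega
        have e1 : bb (ℓ+1) r n = (r*(ℓ+1)+1) * bb (ℓ+1) r (n - (ℓ+1)) := by
          have h5 := bb_add (ℓ+1) r (n - (ℓ+1)) (by omega) (by omega)
          rw [show n - (ℓ+1) + (ℓ+1) = n by omega] at h5
          exact h5
        have e2 : bb ℓ r n = (r*ℓ+1) * bb ℓ r (n - ℓ) := by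
          have h5 := bb_add ℓ r (n - ℓ) hℓ (by omega)
          rw [show n - ℓ + ℓ = n by omega] at h5
          exact h5
        have ihh := ih (n - (ℓ+1)) (by omega) (by omega)
        have hstep := bb_step ℓ r (n - (ℓ+1)) hℓ hr (by omega)
        rw [show n - (ℓ+1) + 1 = n - ℓ by omega] at hstep
        calc bb (ℓ+1) r n = (r*(ℓ+1)+1) * bb (ℓ+1) r (n-(ℓ+1)) := e1
          _ ≤ (r*ℓ+1+r) * bb ℓ r (n-(ℓ+1)) := by
              rw [show r*(ℓ+1)+1 = r*ℓ+1+r by ring]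
              exact Nat.mul_le_mul_left _ ihh
          _ ≤ (r*ℓ+1) * bb ℓ r (n-ℓ) := hstep
          _ = bb ℓ r n := e2.symm

lemma A_anti (ℓ r n : ℕ) (hℓ : 1 ≤ ℓ) (hr : 1 ≤ r) (hn : 1 ≤ n) :
    A (ℓ+1) r n ≤ A ℓ r n := by
  have h1 := r_mul_A (ℓ+1) r n hr
  have h2 := r_mul_A ℓ r n hr
  have h3 := bb_anti ℓ r n hℓ hr hn
  have h4 : r * A (ℓ+1) r n ≤ r * A ℓ r n := by linarith
  exact Nat.le_of_mul_le_mul_left h4 (by omega)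

lemma A_ge (ℓ r n : ℕ) (hℓ : 1 ≤ ℓ) (hr : 1 ≤ r) (hn : 1 ≤ n) : n ≤ A ℓ r n := by
  have h1 := r_mul_A ℓ r n hr
  have h2 := bb_ge ℓ r n hℓ hn
  have h4 : r * n ≤ r * A ℓ r n := by linarith
  exact Nat.le_of_mul_le_mul_left h4 (by omega)

lemma A_eq (ℓ r n : ℕ) (hr : 1 ≤ r) (hn : 1 ≤ n) (h : n ≤ ℓ) : A ℓ r n = n := by
  have h1 := r_mul_A ℓ r n hr
  have h2 := bb_index ℓ r n 0 hn h
  simp at h2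
  have h4 : r * A ℓ r n = r * n := by omega
  exact Nat.eq_of_mul_eq_mul_left (by omega) h4

lemma A_strict (ℓ r : ℕ) (hℓ : 1 ≤ ℓ) (hr : 1 ≤ r) :
    A (ℓ+1) r (ℓ+1) < A ℓ r (ℓ+1) := by
  have h1 : A (ℓ+1) r (ℓ+1) = ℓ+1 := A_eq (ℓ+1) r (ℓ+1) hr (by omega) le_rfl
  have h2 := r_mul_A ℓ r (ℓ+1) hr
  have h3 := bb_index ℓ r 1 1 le_rfl hℓ
  rw [show 1*ℓ+1 = ℓ+1 by ring] at h3
  rw [h3] at h2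
  have e : (r*1+1) * (r*ℓ+1)^1 = r*(ℓ+1+r*ℓ) + 1 := by ring
  rw [e] at h2
  have h4 : A ℓ r (ℓ+1) = ℓ+1+r*ℓ := Nat.eq_of_mul_eq_mul_left (by omega : 0 < r) (by omega)
  rw [h1, h4]
  have : 1 ≤ r*ℓ := Nat.one_le_iff_ne_zero.mpr (by positivity)
  omega


set_option maxHeartbeats 1000000 in
lemma summable_A (ℓ r : ℕ) (hℓ : 1 ≤ ℓ) (hr : 1 ≤ r) {x : ℝ} (hx0 : 0 ≤ x) (hx1 : x < 1) :
    Summable (fun n : ℕ => x ^ (A ℓ r (n+1))) := by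
  apply Summable.of_nonneg_of_le (fun n => pow_nonneg hx0 _) (fun n => ?_)
    (summable_geometric_of_lt_one hx0 hx1)
  exact pow_le_pow_of_le_one hx0 hx1.le
    (le_trans (by omega) (A_ge ℓ r (n+1) hℓ hr (by omega)))

set_option maxHeartbeats 1000000 in
lemma tsum_A_eq (ℓ r : ℕ) (hℓ : 1 ≤ ℓ) (hr : 1 ≤ r) {x : ℝ} (hx0 : 0 ≤ x) (hx1 : x < 1) :
    ∑' j : ℕ, ∑ i ∈ Finset.Icc 1 ℓ, x ^ (L ℓ r i j + 1) = ∑' n : ℕ, x ^ (A ℓ r (n+1)) := by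
  haveI : NeZero ℓ := ⟨by omega⟩
  set f : ℕ → ℝ := fun n => x ^ (A ℓ r (n+1)) with hf
  have hs : Summable f := summable_A ℓ r hℓ hr hx0 hx1
  have h1 : ∑' n, f n = ∑' p : ℕ × Fin ℓ, f ((Nat.divModEquiv ℓ).symm p) :=
    ((Nat.divModEquiv ℓ).symm.tsum_eq f).symm
  have hsp : Summable (fun p : ℕ × Fin ℓ => f ((Nat.divModEquiv ℓ).symm p)) :=
    ((Nat.divModEquiv ℓ).symm.summable_iff).mpr hs
  have h2 : ∑' p : ℕ × Fin ℓ, f ((Nat.divModEquiv ℓ).symm p)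
      = ∑' j : ℕ, ∑' k : Fin ℓ, f ((Nat.divModEquiv ℓ).symm (j, k)) :=
    Summable.tsum_prod' hsp (fun _ => Summable.of_finite)
  rw [h1, h2]
  apply tsum_congr
  intro j
  rw [tsum_fintype]
  refine Eq.symm ?_
  have e1 : ∀ k : Fin ℓ, ((Nat.divModEquiv ℓ).symm (j, k) : ℕ) = j*ℓ + k := by
    intro k; simp [Nat.divModEquiv]
  calc ∑ k : Fin ℓ, f ((Nat.divModEquiv ℓ).symm (j, k))
      = ∑ k : Fin ℓ, x ^ (L ℓ r ((k : ℕ)+1) j + 1) := by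
        apply Finset.sum_congr rfl
        intro k _
        rw [hf]
        simp only []
        rw [e1 k]
        congr 1
        rw [A_index ℓ r ((k : ℕ)+1) j hℓ hr (by omega) (by omega), ← add_assoc]
    _ = ∑ k ∈ Finset.range ℓ, x ^ (L ℓ r (k+1) j + 1) := (Finset.sum_range (fun m => x ^ (L ℓ r (m+1) j + 1))).symm
    _ = ∑ i ∈ Finset.Icc 1 ℓ, x ^ (L ℓ r i j + 1) := by
        rw [← Finset.Ico_add_one_right_eq_Icc, Finset.sum_Ico_eq_sum_range]
        simp only [Nat.add_sub_cancel]
        exact Finset.sum_congr rfl (fun k _ => by rw [add_comm 1 k])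

lemma v_eq_s15 (q ℓ r : ℕ) (hℓ : 1 ≤ ℓ) (hr : 1 ≤ r) {x : ℝ} (hx0 : 0 ≤ x) (hx1 : x < 1) :
    v q ℓ r x = ((q : ℝ) - 1) * ∑' n : ℕ, x ^ (A ℓ r (n+1)) := by
  rw [v, tsum_A_eq ℓ r hℓ hr hx0 hx1]

lemma v_strictMono (q ℓ r : ℕ) (hq : 2 ≤ q) (hℓ : 1 ≤ ℓ) (hr : 1 ≤ r) {x y : ℝ}
    (hx0 : 0 ≤ x) (hxy : x < y) (hy1 : y < 1) : v q ℓ r x < v q ℓ r y := by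
  have hy0 : 0 ≤ y := le_of_lt (lt_of_le_of_lt hx0 hxy)
  rw [v_eq_s15 q ℓ r hℓ hr hx0 (lt_trans hxy hy1), v_eq_s15 q ℓ r hℓ hr hy0 hy1]
  have hq1 : (0:ℝ) < (q:ℝ) - 1 := by
    have : (2:ℝ) ≤ q := by exact_mod_cast hq
    linarith
  apply mul_lt_mul_of_pos_left _ hq1
  apply Summable.tsum_lt_tsum (i := 0)
  · intro n
    exact pow_le_pow_left₀ hx0 hxy.le _
  · have h1 : A ℓ r 1 = 1 := A_eq ℓ r 1 hr le_rfl hℓ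
    simp only [zero_add, h1, pow_one]
    exact hxy
  · exact summable_A ℓ r hℓ hr hx0 (lt_trans hxy hy1)
  · exact summable_A ℓ r hℓ hr hy0 hy1

lemma v_lt_succ (q ℓ r : ℕ) (hq : 2 ≤ q) (hℓ : 1 ≤ ℓ) (hr : 1 ≤ r) {x : ℝ}
    (hx0 : 0 < x) (hx1 : x < 1) : v q ℓ r x < v q (ℓ+1) r x := by
  rw [v_eq_s15 q ℓ r hℓ hr hx0.le hx1, v_eq_s15 q (ℓ+1) r (by omega) hr hx0.le hx1]
  have hq1 : (0:ℝ) < (q:ℝ) - 1 := by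
    have : (2:ℝ) ≤ q := by exact_mod_cast hq
    linarith
  apply mul_lt_mul_of_pos_left _ hq1
  apply Summable.tsum_lt_tsum (i := ℓ)
  · intro n
    exact pow_le_pow_of_le_one hx0.le hx1.le (A_anti ℓ r (n+1) hℓ hr (by omega))
  · exact pow_lt_pow_right_of_lt_one₀ hx0 hx1 (A_strict ℓ r hℓ hr)
  · exact summable_A ℓ r hℓ hr hx0.le hx1
  · exact summable_A (ℓ+1) r (by omega) hr hx0.le hx1

lemma rho_lower (q ℓ r : ℕ) (hq : 2 ≤ q) (hℓ : 1 ≤ ℓ) (hr : 1 ≤ r) {x : ℝ}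
    (hx0 : 0 < x) (hx1 : x < 1) (hv : v q ℓ r x = 1) : ((q : ℝ))⁻¹ ≤ x := by
  have hq1 : (0:ℝ) < (q:ℝ) - 1 := by
    have : (2:ℝ) ≤ q := by exact_mod_cast hq
    linarith
  have hv' : ((q:ℝ) - 1) * ∑' n : ℕ, x ^ (A ℓ r (n+1)) = 1 := by
    rw [← v_eq_s15 q ℓ r hℓ hr hx0.le hx1]; exact hv
  have key : (1:ℝ) ≤ ((q:ℝ) - 1) * (x * (1-x)⁻¹) := by
    have h2 : Summable (fun n : ℕ => x ^ (n+1)) := by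
      simpa [pow_succ'] using (summable_geometric_of_lt_one hx0.le hx1).mul_left x
    have h3 : ∑' n : ℕ, x ^ (n+1) = x * (1-x)⁻¹ := by
      have hg := tsum_geometric_of_lt_one hx0.le hx1
      calc ∑' n : ℕ, x ^ (n+1) = ∑' n : ℕ, x * x ^ n := by
            apply tsum_congr; intro n; rw [pow_succ']
        _ = x * (1-x)⁻¹ := by rw [tsum_mul_left, hg]
    have bound : ∑' n : ℕ, x ^ (A ℓ r (n+1)) ≤ x * (1-x)⁻¹ := by
      rw [← h3]
      apply Summable.tsum_le_tsum _ (summable_A ℓ r hℓ hr hx0.le hx1) h2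
      intro n
      exact pow_le_pow_of_le_one hx0.le hx1.le (A_ge ℓ r (n+1) hℓ hr (by omega))
    calc (1:ℝ) = ((q:ℝ) - 1) * ∑' n : ℕ, x ^ (A ℓ r (n+1)) := hv'.symm
      _ ≤ ((q:ℝ) - 1) * (x * (1-x)⁻¹) := mul_le_mul_of_nonneg_left bound hq1.le
  have hx1' : (0:ℝ) < 1 - x := by linarith
  rw [inv_le_iff_one_le_mul₀ (by positivity)]
  have h4 : 1 - x ≤ ((q:ℝ) - 1) * x := by
    have := mul_le_mul_of_nonneg_right key hx1'.le
    rw [one_mul] at this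
    calc 1 - x ≤ ((q:ℝ)-1) * (x * (1-x)⁻¹) * (1-x) := this
      _ = ((q:ℝ)-1) * x * ((1-x)⁻¹ * (1-x)) := by ring
      _ = ((q:ℝ)-1) * x := by rw [inv_mul_cancel₀ (by linarith), mul_one]
  nlinarith

lemma v_ge_partial (q ℓ r : ℕ) (hq : 2 ≤ q) (hℓ : 1 ≤ ℓ) (hr : 1 ≤ r) {x : ℝ}
    (hx0 : 0 ≤ x) (hx1 : x < 1) :
    ((q : ℝ) - 1) * ∑ i ∈ Finset.range ℓ, x ^ (i+1) ≤ v q ℓ r x := by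
  have hq1 : (0:ℝ) ≤ (q:ℝ) - 1 := by
    have : (2:ℝ) ≤ q := by exact_mod_cast hq
    linarith
  rw [v_eq_s15 q ℓ r hℓ hr hx0 hx1]
  apply mul_le_mul_of_nonneg_left _ hq1
  have h1 : ∑ i ∈ Finset.range ℓ, x ^ (i+1) = ∑ i ∈ Finset.range ℓ, x ^ (A ℓ r (i+1)) := by
    apply Finset.sum_congr rfl
    intro i hi
    rw [A_eq ℓ r (i+1) hr (by omega) (by simpa using Finset.mem_range.mp hi)]
  rw [h1]
  exact Summable.sum_le_tsum _ (fun i _ => pow_nonneg hx0 _) (summable_A ℓ r hℓ hr hx0 hx1)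


open Filter Real Finset in
/-- for fixed `q ≥ 2` and `r ≥ 1`, the zero-error capacity
`C₀(ℓ) = −log₂ ρ(q,ℓ,r)` is strictly increasing in `ℓ ≥ 1`, and
`lim_{ℓ→∞} C₀(ℓ) = log₂ q`. -/
theorem stmt15 (q r : ℕ) (hq : 2 ≤ q) (hr : 1 ≤ r)
    (ρ : ℕ → ℝ) (hρ : ∀ ℓ : ℕ, 1 ≤ ℓ → ρ ℓ ∈ Set.Ioo (0 : ℝ) 1 ∧ v q ℓ r (ρ ℓ) = 1) :
    StrictMonoOn (fun ℓ : ℕ => - Real.logb 2 (ρ ℓ)) (Set.Ici 1) ∧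
    Filter.Tendsto (fun ℓ : ℕ => - Real.logb 2 (ρ ℓ)) Filter.atTop
      (nhds (Real.logb 2 (q : ℝ))) := by
  have hq0 : (0:ℝ) < (q:ℝ) := by positivity
  have hanti : ∀ ℓ : ℕ, 1 ≤ ℓ → ρ (ℓ+1) < ρ ℓ := by
    intro ℓ hℓ
    obtain ⟨⟨hp0, hp1⟩, hpv⟩ := hρ ℓ hℓ
    obtain ⟨⟨hs0, hs1⟩, hsv⟩ := hρ (ℓ+1) (by omega)
    by_contra hcon
    push_neg at hcon
    have h1 : v q (ℓ+1) r (ρ ℓ) ≤ v q (ℓ+1) r (ρ (ℓ+1)) := by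
      rcases eq_or_lt_of_le hcon with h | h
      · rw [h]
      · exact (v_strictMono q (ℓ+1) r hq (by omega) hr hp0.le h hs1).le
    have h2 : v q ℓ r (ρ ℓ) < v q (ℓ+1) r (ρ ℓ) := v_lt_succ q ℓ r hq hℓ hr hp0 hp1
    rw [hpv] at h2
    rw [hsv] at h1
    linarith
  have hanti' : ∀ k, 1 ≤ k → ∀ m, k < m → ρ m < ρ k := by
    intro k hk m hm
    induction m with
    | zero => omega
    | succ n ih =>
      rcases Nat.lt_or_ge k n with h | h
      · exact lt_trans (hanti n (by omega)) (ih h)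
      · have hnk : n = k := by omega
        subst hnk
        exact hanti n hk
  constructor
  · intro a ha b hb hab
    simp only
    have hb1 : 1 ≤ b := le_trans ha hab.le
    obtain ⟨⟨ha0, ha1⟩, _⟩ := hρ a ha
    obtain ⟨⟨hb0, hb1'⟩, _⟩ := hρ b hb1
    have h := hanti' a ha b hab
    have hlog := Real.logb_lt_logb (by norm_num : (1:ℝ) < 2) hb0 h
    linarith
  · have hrho_to : Tendsto ρ atTop (nhds ((q:ℝ)⁻¹)) := by
      rw [tendsto_order]
      constructor
      · intro a ha
        filter_upwards [eventually_ge_atTop 1] with ℓ hℓ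
        obtain ⟨⟨h0, h1⟩, hv1⟩ := hρ ℓ hℓ
        exact lt_of_lt_of_le ha (rho_lower q ℓ r hq hℓ hr h0 h1 hv1)
      · intro c hc
        by_cases hc1 : c < 1
        · have hc0 : (0:ℝ) < c := lt_trans (by positivity) hc
          have hgeom : HasSum (fun n : ℕ => c ^ (n+1)) (c * (1-c)⁻¹) := by
            have := (hasSum_geometric_of_lt_one hc0.le hc1).mul_left c
            convert this using 2 with n
            · rfl
            · exact pow_succ' c _
          have hlim : Tendsto (fun ℓ : ℕ => ((q:ℝ)-1) * ∑ i ∈ range ℓ, c ^ (i+1)) atTop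
              (nhds (((q:ℝ)-1) * (c * (1-c)⁻¹))) := by
            have h5 := (hgeom.mul_left ((q:ℝ)-1)).tendsto_sum_nat
            simpa [Finset.mul_sum] using h5
          have hTgt : 1 < ((q:ℝ)-1) * (c * (1-c)⁻¹) := by
            have hqc : 1 < (q:ℝ) * c := by
              have := mul_lt_mul_of_pos_left hc hq0
              rwa [mul_inv_cancel₀ (ne_of_gt hq0)] at this
            have h1c : (0:ℝ) < 1 - c := by linarith
            rw [show ((q:ℝ)-1) * (c * (1-c)⁻¹) = (((q:ℝ)-1) * c) / (1-c) by ring,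
              lt_div_iff₀ h1c]
            nlinarith
          have hev : ∀ᶠ ℓ : ℕ in atTop, 1 < ((q:ℝ)-1) * ∑ i ∈ range ℓ, c ^ (i+1) :=
            (tendsto_order.mp hlim).1 1 hTgt
          filter_upwards [hev, eventually_ge_atTop 1] with ℓ h1ℓ hℓ
          obtain ⟨⟨h0, h1⟩, hv1⟩ := hρ ℓ hℓ
          by_contra hcon
          push_neg at hcon
          have hsum_le : ∑ i ∈ range ℓ, c ^ (i+1) ≤ ∑ i ∈ range ℓ, (ρ ℓ) ^ (i+1) :=
            Finset.sum_le_sum (fun i _ => pow_le_pow_left₀ hc0.le hcon _)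
          have hqpos : (0:ℝ) ≤ (q:ℝ) - 1 := by
            have : (2:ℝ) ≤ q := by exact_mod_cast hq
            linarith
          have := calc ((q:ℝ)-1) * ∑ i ∈ range ℓ, c ^ (i+1)
              ≤ ((q:ℝ)-1) * ∑ i ∈ range ℓ, (ρ ℓ) ^ (i+1) :=
                mul_le_mul_of_nonneg_left hsum_le hqpos
            _ ≤ v q ℓ r (ρ ℓ) := v_ge_partial q ℓ r hq hℓ hr h0.le h1
            _ = 1 := hv1
          linarith
        · filter_upwards [eventually_ge_atTop 1] with ℓ hℓ
          exact lt_of_lt_of_le (hρ ℓ hℓ).1.2 (not_lt.mp hc1)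
    have hcont : ContinuousAt (fun y : ℝ => - Real.logb 2 y) ((q:ℝ)⁻¹) :=
      (Real.continuousAt_logb (ne_of_gt (by positivity))).neg
    have hfinal := hcont.tendsto.comp hrho_to
    have heq : - Real.logb 2 ((q:ℝ)⁻¹) = Real.logb 2 (q:ℝ) := by
      rw [Real.logb_inv]; ring
    rw [heq] at hfinal
    exact hfinal


end ZeroErrorDup
end
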